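/- A homeomorphism f : X → X of a compact metric space X is equicontinuous if and only if it is distal and locally almost periodic (i.e., every point of X is locally almost periodic). -/

import Mathlib

open Metric Filter Topology Set

variable {X : Type*}

/-- The `n`-th iterate (for `n : ℤ`) of a homeomorphism `f : X ≃ₜ X`. -/
def hIter [TopologicalSpace X] (f : X ≃ₜ X) (n : ℤ) : X → X :=
  ⇑(f.toEquiv ^ n)

/-- `f` is equicontinuous: for every `ε > 0` there is `δ > 0` such that
`d(fⁿ x, fⁿ y) ≤ ε` for all `n : ℤ` whenever `d(x, y) ≤ δ`. -/
def EquicontHomeo [MetricSpace X] (f : X ≃ₜ X) : Prop :=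
  ∀ ε > (0 : ℝ), ∃ δ > (0 : ℝ), ∀ x y : X, dist x y ≤ δ →
    ∀ n : ℤ, dist (hIter f n x) (hIter f n y) ≤ ε

/-- Property (CW): `inf_{n ∈ ℤ} dist(fⁿ x, fⁿ C) > 0` for every `x ∈ X` and every
subcontinuum `C` (nonempty compact connected subset) with `x ∉ C`. -/
def PropCW [MetricSpace X] (f : X ≃ₜ X) : Prop :=
  ∀ (x : X) (C : Set X), C.Nonempty → IsCompact C → IsConnected C → x ∉ C →
    0 < ⨅ n : ℤ, infDist (hIter f n x) (hIter f n '' C)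

/-- `X` is semi-locally connected at `p`: every open neighborhood `U` of `p` contains an
open neighborhood `V` of `p` such that `X \ U` is covered by finitely many connected
components of `X \ V`. -/
def SemiLocallyConnectedAt [TopologicalSpace X] (p : X) : Prop :=
  ∀ U : Set X, IsOpen U → p ∈ U → ∃ V : Set X, IsOpen V ∧ p ∈ V ∧ V ⊆ U ∧
    ∃ 𝒞 : Finset (Set X), (∀ C ∈ 𝒞, ∃ x ∈ Vᶜ, C = connectedComponentIn Vᶜ x) ∧
      Uᶜ ⊆ ⋃ C ∈ 𝒞, C

/-- `x` is an almost automorphic point of `f`. -/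
def AlmostAutomorphicPt [MetricSpace X] (f : X ≃ₜ X) (x : X) : Prop :=
  ∀ (n : ℕ → ℤ) (y : X), Tendsto (fun i => hIter f (n i) x) atTop (𝓝 y) →
    Tendsto (fun i => hIter f (-(n i)) y) atTop (𝓝 x)

/-- A set `F ⊆ ℤ` is syndetic if it meets every interval `[n, n + l]` for some fixed `l > 0`. -/
def SyndeticZ (F : Set ℤ) : Prop :=
  ∃ l > (0 : ℤ), ∀ n : ℤ, ∃ m ∈ F, n ≤ m ∧ m ≤ n + l

/-- `x` is an almost periodic point of `f`. -/
def AlmostPeriodicPt [TopologicalSpace X] (f : X ≃ₜ X) (x : X) : Prop :=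
  ∀ U ∈ 𝓝 x, ∃ F : Set ℤ, SyndeticZ F ∧ ∀ n ∈ F, hIter f n x ∈ U

/-- `x` is a locally almost periodic point of `f`. -/
def LocallyAlmostPeriodicPt [TopologicalSpace X] (f : X ≃ₜ X) (x : X) : Prop :=
  ∀ U ∈ 𝓝 x, ∃ V ∈ 𝓝 x, V ⊆ U ∧ ∃ F : Set ℤ, SyndeticZ F ∧ ∀ n ∈ F, hIter f n '' V ⊆ U

/-- `f` is distal. -/
def DistalHomeo [MetricSpace X] (f : X ≃ₜ X) : Prop :=
  ∀ x y : X, x ≠ y → 0 < ⨅ n : ℤ, dist (hIter f n x) (hIter f n y)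

/-- `f` is transitive: some orbit `{fⁿ x : n ∈ ℤ}` is dense. -/
def TransitiveHomeo [TopologicalSpace X] (f : X ≃ₜ X) : Prop :=
  ∃ x : X, Dense (Set.range fun n : ℤ => hIter f n x)

section lemmas

variable [TopologicalSpace X] (f : X ≃ₜ X)

lemma hIter_add (m n : ℤ) (x : X) : hIter f (m + n) x = hIter f m (hIter f n x) := by
  unfold hIter; rw [zpow_add, Equiv.Perm.mul_apply]

lemma hIter_zero (x : X) : hIter f 0 x = x := rfl

lemma continuous_hIter (n : ℤ) : Continuous (hIter f n) := by
  unfold hIter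
  induction n using Int.induction_on with
  | zero => simpa using continuous_id
  | succ k ih =>
      rw [zpow_add_one, Equiv.Perm.coe_mul]
      exact ih.comp f.continuous
  | pred k ih =>
      rw [zpow_sub_one, Equiv.Perm.coe_mul]
      have h : ⇑(f.toEquiv⁻¹) = ⇑f.symm := rfl
      rw [h]
      exact ih.comp f.symm.continuous

end lemmas

section forward

variable [MetricSpace X] [CompactSpace X] (f : X ≃ₜ X)

/-- The orbit of `f` in the "sup metric" is totally bounded. -/
lemma equicont_net (hf : EquicontHomeo f) {ε : ℝ} (hε : 0 < ε) :
    ∃ S : Finset ℤ, S.Nonempty ∧ ∀ n : ℤ, ∃ k ∈ S, ∀ y : X,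
      dist (hIter f n y) (hIter f k y) < ε := by
  obtain ⟨δ, hδ, hδ'⟩ := hf (ε / 4) (by linarith)
  obtain ⟨t, -, htfin, htcover⟩ := finite_cover_balls_of_compact (isCompact_univ (X := X)) hδ
  haveI := htfin.fintype
  set Φ : ℤ → (↥t → X) := fun n j => hIter f n j.1 with hΦ
  have htb : TotallyBounded (Set.range Φ) :=
    (isCompact_univ.totallyBounded).subset (subset_univ _)
  obtain ⟨T, hTsub, hTfin, hTcover⟩ :=
    totallyBounded_iff_subset.mp htb {p | dist p.1 p.2 < ε / 4}
      (dist_mem_uniformity (by linarith))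
  have hsel : ∀ c ∈ T, ∃ k : ℤ, Φ k = c := fun c hc => hTsub hc
  choose! g hg using hsel
  refine ⟨insert 0 (hTfin.toFinset.image g), ⟨0, Finset.mem_insert_self _ _⟩, ?_⟩
  intro n
  have hn : Φ n ∈ ⋃ c ∈ T, {x | (x, c) ∈ {p : (↥t → X) × (↥t → X) | dist p.1 p.2 < ε / 4}} :=
    hTcover ⟨n, rfl⟩
  simp only [mem_iUnion, mem_setOf_eq, exists_prop] at hn
  obtain ⟨c, hcT, hc⟩ := hn
  refine ⟨g c, Finset.mem_insert_of_mem
    (Finset.mem_image_of_mem g (hTfin.mem_toFinset.mpr hcT)), ?_⟩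
  intro y
  have hy : y ∈ ⋃ j ∈ t, ball j δ := htcover (mem_univ y)
  simp only [mem_iUnion, exists_prop] at hy
  obtain ⟨j, hjt, hjy⟩ := hy
  have h1 : ∀ nn : ℤ, dist (hIter f nn y) (hIter f nn j) ≤ ε / 4 :=
    hδ' y j (le_of_lt hjy)
  have h2 : dist (Φ n ⟨j, hjt⟩) (Φ (g c) ⟨j, hjt⟩) < ε / 4 := by
    have hpd := dist_le_pi_dist (Φ n) (Φ (g c)) ⟨j, hjt⟩
    rw [← hg c hcT] at hc
    exact lt_of_le_of_lt hpd hc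
  have h2' : dist (hIter f n j) (hIter f (g c) j) < ε / 4 := h2
  calc dist (hIter f n y) (hIter f (g c) y)
      ≤ dist (hIter f n y) (hIter f n j) + dist (hIter f n j) (hIter f (g c) j)
        + dist (hIter f (g c) j) (hIter f (g c) y) := dist_triangle4 _ _ _ _
    _ < ε := by
        have := h1 n
        have h3 : dist (hIter f (g c) j) (hIter f (g c) y) ≤ ε / 4 := by
          rw [dist_comm]; exact h1 (g c)
        linarith

/-- Return times to any ball around a point are syndetic. -/
lemma syndetic_returns (hf : EquicontHomeo f) (x : X) {ε : ℝ} (hε : 0 < ε) :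
    SyndeticZ {m : ℤ | dist (hIter f m x) x < ε} := by
  obtain ⟨S, hSne, hS⟩ := equicont_net f hf hε
  obtain ⟨c, hc⟩ : ∃ c : ℤ, ∀ k ∈ S, |k| ≤ c := by
    refine ⟨(S.image fun k => |k|).max' (hSne.image _), fun k hk => ?_⟩
    exact Finset.le_max' _ _ (Finset.mem_image_of_mem _ hk)
  obtain ⟨k₀, hk₀⟩ := hSne
  have hc0 : 0 ≤ c := le_trans (abs_nonneg k₀) (hc k₀ hk₀)
  refine ⟨2 * c + 1, by omega, fun n => ?_⟩
  obtain ⟨k, hkS, hk⟩ := hS (n + c)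
  have habs := abs_le.mp (hc k hkS)
  refine ⟨n + c - k, ?_, by omega, by omega⟩
  have := hk (hIter f (-k) x)
  have e1 : hIter f (n + c) (hIter f (-k) x) = hIter f (n + c - k) x := by
    rw [← hIter_add]; ring_nf
  have e2 : hIter f k (hIter f (-k) x) = x := by
    rw [← hIter_add]; simp [hIter_zero]
  rw [e1, e2] at this
  exact this

lemma equicont_distal (hf : EquicontHomeo f) : DistalHomeo f := by
  intro x y hxy
  have hd : 0 < dist x y := dist_pos.mpr hxy
  obtain ⟨δ, hδ, hδ'⟩ := hf (dist x y / 2) (by linarith)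
  have key : ∀ n : ℤ, δ ≤ dist (hIter f n x) (hIter f n y) := by
    intro n
    by_contra h
    push_neg at h
    have := hδ' (hIter f n x) (hIter f n y) (le_of_lt h) (-n)
    have e1 : hIter f (-n) (hIter f n x) = x := by
      rw [← hIter_add]; simp [hIter_zero]
    have e2 : hIter f (-n) (hIter f n y) = y := by
      rw [← hIter_add]; simp [hIter_zero]
    rw [e1, e2] at this
    linarith
  exact lt_of_lt_of_le hδ (le_ciInf key)

lemma equicont_lap (hf : EquicontHomeo f) (x : X) : LocallyAlmostPeriodicPt f x := by
  intro U hU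
  obtain ⟨ε, hε, hball⟩ := Metric.mem_nhds_iff.mp hU
  obtain ⟨δ, hδ, hδ'⟩ := hf (ε / 4) (by linarith)
  refine ⟨ball x (min δ (ε / 4)), ball_mem_nhds x (by positivity), ?_, ?_⟩
  · exact subset_trans (ball_subset_ball (by
      have := min_le_right δ (ε/4); linarith)) hball
  · refine ⟨{m : ℤ | dist (hIter f m x) x < ε / 2}, syndetic_returns f hf x (by linarith), ?_⟩
    rintro n hn z ⟨y, hyV, rfl⟩
    apply hball
    have h1 : dist (hIter f n y) (hIter f n x) ≤ ε / 4 := by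
      apply hδ' y x _ n
      have := mem_ball.mp hyV
      have := min_le_left δ (ε/4)
      linarith
    have h2 : dist (hIter f n x) x < ε / 2 := hn
    have := dist_triangle (hIter f n y) (hIter f n x) x
    exact mem_ball.mpr (by linarith)

end forward

theorem equicont_iff_distal_and_locallyAlmostPeriodic'
    [MetricSpace X] [CompactSpace X] (f : X ≃ₜ X) :
    EquicontHomeo f ↔ (DistalHomeo f ∧ ∀ x : X, LocallyAlmostPeriodicPt f x) := by
  constructor
  · intro hf
    exact ⟨equicont_distal f hf, equicont_lap f hf⟩
  · rintro ⟨hd, hlap⟩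
    by_contra h
    unfold EquicontHomeo at h
    push_neg at h
    obtain ⟨ε, hε, hcon⟩ := h
    -- choose witnesses for δ = 1/(i+1)
    have hsel : ∀ i : ℕ, ∃ p : X × X, ∃ n : ℤ, dist p.1 p.2 ≤ 1 / (i + 1) ∧
        ε < dist (hIter f n p.1) (hIter f n p.2) := by
      intro i
      obtain ⟨x, y, hxy, n, hn⟩ := hcon (1 / (i + 1)) (by positivity)
      exact ⟨(x, y), n, hxy, hn⟩
    choose p n hp1 hp2 using hsel
    set xs : ℕ → X := fun i => (p i).1 with hxs
    set ys : ℕ → X := fun i => (p i).2 with hys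
    -- pack into a compact product space and extract a convergent subsequence
    set w : ℕ → X × X × X × X :=
      fun i => (xs i, ys i, hIter f (n i) (xs i), hIter f (n i) (ys i)) with hw
    obtain ⟨q, -, φ, hφ, hq⟩ :=
      (isCompact_univ (X := X × X × X × X)).tendsto_subseq (fun i => mem_univ (w i))
    obtain ⟨z, z', a, b⟩ := q
    have hz : Tendsto (fun i => xs (φ i)) atTop (𝓝 z) :=
      ((continuous_fst.tendsto _).comp hq)
    have hz' : Tendsto (fun i => ys (φ i)) atTop (𝓝 z') :=
      ((continuous_fst.tendsto _).comp ((continuous_snd.tendsto _).comp hq))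
    have ha : Tendsto (fun i => hIter f (n (φ i)) (xs (φ i))) atTop (𝓝 a) :=
      ((continuous_fst.tendsto _).comp
        ((continuous_snd.tendsto _).comp ((continuous_snd.tendsto _).comp hq)))
    have hb : Tendsto (fun i => hIter f (n (φ i)) (ys (φ i))) atTop (𝓝 b) :=
      ((continuous_snd.tendsto _).comp
        ((continuous_snd.tendsto _).comp ((continuous_snd.tendsto _).comp hq)))
    -- z = z'
    have hdist0 : Tendsto (fun i => dist (xs (φ i)) (ys (φ i))) atTop (𝓝 0) := by
      apply squeeze_zero (fun i => dist_nonneg) (fun i => hp1 (φ i))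
      exact tendsto_one_div_add_atTop_nhds_zero_nat.comp hφ.tendsto_atTop
    have hzz' : z = z' := by
      have h1 : Tendsto (fun i => dist (xs (φ i)) (ys (φ i))) atTop (𝓝 (dist z z')) :=
        hz.dist hz'
      have := tendsto_nhds_unique h1 hdist0
      exact dist_eq_zero.mp this
    subst hzz'
    -- a ≠ b
    have hab : ε ≤ dist a b := by
      have h1 : Tendsto (fun i => dist (hIter f (n (φ i)) (xs (φ i)))
          (hIter f (n (φ i)) (ys (φ i)))) atTop (𝓝 (dist a b)) := ha.dist hb
      exact le_of_tendsto_of_tendsto' tendsto_const_nhds h1 (fun i => le_of_lt (hp2 (φ i)))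
    have hane : a ≠ b := by
      intro hh; rw [hh, dist_self] at hab; linarith
    -- distality at a b
    have hρ : 0 < ⨅ m : ℤ, dist (hIter f m a) (hIter f m b) := hd a b hane
    set ρ : ℝ := ⨅ m : ℤ, dist (hIter f m a) (hIter f m b) with hρdef
    -- local almost periodicity at z
    obtain ⟨V, hV, hVU, F, ⟨l, hl, hlF⟩, hF⟩ := hlap z (ball z (ρ / 8)) (ball_mem_nhds z (by positivity))
    -- eventual conditions
    have ev1 : ∀ᶠ i in atTop, xs (φ i) ∈ V := hz.eventually_mem hV
    have ev2 : ∀ᶠ i in atTop, ys (φ i) ∈ V := hz'.eventually_mem hV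
    have ev3 : ∀ᶠ i in atTop, ∀ j ∈ Finset.Icc (0 : ℤ) l,
        dist (hIter f j (hIter f (n (φ i)) (xs (φ i)))) (hIter f j a) < ρ / 8 := by
      rw [eventually_all_finset]
      intro j _
      have := ((continuous_hIter f j).tendsto a).comp ha
      exact this (ball_mem_nhds _ (by positivity))
    have ev4 : ∀ᶠ i in atTop, ∀ j ∈ Finset.Icc (0 : ℤ) l,
        dist (hIter f j (hIter f (n (φ i)) (ys (φ i)))) (hIter f j b) < ρ / 8 := by
      rw [eventually_all_finset]
      intro j _
      have := ((continuous_hIter f j).tendsto b).comp hb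
      exact this (ball_mem_nhds _ (by positivity))
    obtain ⟨i, ⟨h1, h2⟩, h3, h4⟩ := ((ev1.and ev2).and (ev3.and ev4)).exists
    -- pick a syndetic return in [n, n+l]
    obtain ⟨m, hmF, hm1, hm2⟩ := hlF (n (φ i))
    set r : ℤ := m - n (φ i) with hr
    have hrIcc : r ∈ Finset.Icc (0 : ℤ) l := Finset.mem_Icc.mpr ⟨by omega, by omega⟩
    have hmr : ∀ u : X, hIter f m u = hIter f r (hIter f (n (φ i)) u) := by
      intro u
      rw [← hIter_add]
      congr 1
      omega
    -- f^m of the points is in the ball around z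
    have hx_in : hIter f m (xs (φ i)) ∈ ball z (ρ / 8) :=
      hF m hmF ⟨xs (φ i), h1, rfl⟩
    have hy_in : hIter f m (ys (φ i)) ∈ ball z (ρ / 8) :=
      hF m hmF ⟨ys (φ i), h2, rfl⟩
    have d1 : dist (hIter f r a) (hIter f m (xs (φ i))) < ρ / 8 := by
      rw [hmr, dist_comm]; exact h3 r hrIcc
    have d2 : dist (hIter f m (ys (φ i))) (hIter f r b) < ρ / 8 := by
      rw [hmr]; exact h4 r hrIcc
    have d3 : dist (hIter f m (xs (φ i))) (hIter f m (ys (φ i))) < ρ / 4 := by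
      have t1 := mem_ball.mp hx_in
      have t2 := mem_ball.mp hy_in
      have := dist_triangle (hIter f m (xs (φ i))) z (hIter f m (ys (φ i)))
      rw [dist_comm z] at this
      linarith
    have dtot : dist (hIter f r a) (hIter f r b) < ρ / 2 := by
      have := dist_triangle4 (hIter f r a) (hIter f m (xs (φ i)))
        (hIter f m (ys (φ i))) (hIter f r b)
      linarith
    have hge : ρ ≤ dist (hIter f r a) (hIter f r b) := by
      apply ciInf_le _ r
      refine ⟨0, ?_⟩
      rintro v ⟨m', rfl⟩
      exact dist_nonneg
    linarith


/-- A homeomorphism of a compact metric space is equicontinuous iff it is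
distal and locally almost periodic. -/
theorem equicont_iff_distal_and_locallyAlmostPeriodic
    [MetricSpace X] [CompactSpace X] (f : X ≃ₜ X) :
    EquicontHomeo f ↔ (DistalHomeo f ∧ ∀ x : X, LocallyAlmostPeriodicPt f x) :=
  equicont_iff_distal_and_locallyAlmostPeriodic' f
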